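/- For μ, ν ∈ 𝐌, the Lorenz functions satisfy L_μ = L_ν on [0,1] if and only if ν is a rescaling of μ, i.e. there exists α > 0 such that ν is the pushforward of μ under the map x ↦ α·x. -/
import Mathlib


open MeasureTheory Filter Topology

noncomputable section

/-- The mean of a measure on `ℝ`. -/
def mMean (μ : Measure ℝ) : ℝ := ∫ x, x ∂μ

/-- `μ ∈ 𝐌`: a Borel probability measure on `ℝ₊` (modelled as a measure on `ℝ` giving no
mass to negative numbers) with finite nonzero mean. -/
def MemM (μ : Measure ℝ) : Prop :=
  IsProbabilityMeasure μ ∧ μ {x | x < 0} = 0 ∧ Integrable id μ ∧ 0 < mMean μ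

/-- The cumulative distribution function `F_μ(x) = μ([0,x])`. -/
def cdfR (μ : Measure ℝ) (x : ℝ) : ℝ := (μ (Set.Icc 0 x)).toReal

/-- The quantile function `Q_μ(p) = inf {x ∈ ℝ₊ : F_μ(x) ≥ p}`. -/
def quant (μ : Measure ℝ) (p : ℝ) : ℝ := sInf {x : ℝ | 0 ≤ x ∧ p ≤ cdfR μ x}

/-- The Lorenz function `L_μ(p) = (∫_0^p Q_μ(t) dt) / m_μ`. -/
def lorenz (μ : Measure ℝ) (p : ℝ) : ℝ := (∫ t in (0:ℝ)..p, quant μ t) / mMean μ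

/-- The pseudo-Lorenz function `Λ_μ(p) = (∫_{[0,Q_μ(p)]} u dμ(u)) / m_μ` for `p ∈ [0,1)`,
with `Λ_μ(1) = 1`. -/
def pseudoLorenz (μ : Measure ℝ) (p : ℝ) : ℝ :=
  if p = 1 then 1 else (∫ u in Set.Icc (0:ℝ) (quant μ p), u ∂μ) / mMean μ

/-- The Gini coefficient `G(μ) = (∫∫ |x-y| d(μ⊗μ)) / (2 m_μ)`. -/
def gini (μ : Measure ℝ) : ℝ := (∫ z : ℝ × ℝ, |z.1 - z.2| ∂(μ.prod μ)) / (2 * mMean μ)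

/-- The Hoover coefficient `H(μ) = (∫ |x - m_μ| dμ) / (2 m_μ)`. -/
def hoover (μ : Measure ℝ) : ℝ := (∫ x, |x - mMean μ| ∂μ) / (2 * mMean μ)

/-- The Wasserstein-1 distance `W₁(μ,ν) = ∫_0^1 |Q_μ - Q_ν|`. -/
def W1 (μ ν : Measure ℝ) : ℝ := ∫ t in (0:ℝ)..1, |quant μ t - quant ν t|

/-- Weak convergence of a sequence of measures: convergence of integrals of all bounded
continuous functions. -/
def WeakCv (μs : ℕ → Measure ℝ) (ν : Measure ℝ) : Prop :=
  ∀ f : ℝ → ℝ, Continuous f → (∃ C : ℝ, ∀ x, |f x| ≤ C) →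
    Tendsto (fun n => ∫ x, f x ∂(μs n)) atTop (𝓝 (∫ x, f x ∂ν))

/-- Uniform integrability of a family of measures on `ℝ₊`:
`sup_i ∫_{(α,∞)} x dμ_i(x) → 0` as `α → +∞`. -/
def UnifInt {ι : Type*} (μs : ι → Measure ℝ) : Prop :=
  ∀ ε > (0:ℝ), ∃ A : ℝ, ∀ α ≥ A, ∀ i, (∫ x in Set.Ioi α, x ∂(μs i)) ≤ ε

end


section Aux
variable {μ : Measure ℝ}

lemma cdfR_nonneg (μ : Measure ℝ) (x : ℝ) : 0 ≤ cdfR μ x := ENNReal.toReal_nonneg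

lemma cdfR_mono [IsFiniteMeasure μ] {x y : ℝ} (h : x ≤ y) : cdfR μ x ≤ cdfR μ y :=
  ENNReal.toReal_mono (measure_ne_top μ _) (measure_mono (Set.Icc_subset_Icc_right h))

lemma cdfR_le_one [IsProbabilityMeasure μ] (x : ℝ) : cdfR μ x ≤ 1 := by
  have := measure_mono (μ := μ) (Set.subset_univ (Set.Icc 0 x))
  simpa [cdfR] using ENNReal.toReal_mono (by simp) this

lemma exists_cdfR_ge (hμ : MemM μ) {p : ℝ} (hp : p < 1) : ∃ x, 0 ≤ x ∧ p ≤ cdfR μ x := by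
  haveI := hμ.1
  have hU : ⋃ n : ℕ, Set.Icc (0:ℝ) n = Set.Ici 0 := by
    ext y
    simp only [Set.mem_iUnion, Set.mem_Icc, Set.mem_Ici]
    constructor
    · rintro ⟨n, h, _⟩; exact h
    · intro hy
      obtain ⟨n, hn⟩ := exists_nat_ge y
      exact ⟨n, hy, hn⟩
  have hIci : μ (Set.Ici (0:ℝ)) = 1 := by
    have : μ (Set.Ici (0:ℝ))ᶜ = 0 := by
      have : (Set.Ici (0:ℝ))ᶜ = {x : ℝ | x < 0} := by ext y; simp
      rw [this]; exact hμ.2.1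
    have h2 := measure_add_measure_compl (μ := μ) (measurableSet_Ici (a := (0:ℝ)))
    rw [this] at h2; simpa using h2
  have hmono : Monotone (fun n : ℕ => Set.Icc (0:ℝ) n) := by
    intro a b hab
    exact Set.Icc_subset_Icc_right (by exact_mod_cast hab)
  have htend : Tendsto (fun n : ℕ => μ (Set.Icc (0:ℝ) n)) atTop (𝓝 (μ (Set.Ici 0))) := by
    have := tendsto_measure_iUnion_atTop (μ := μ) hmono
    rwa [hU] at this
  rw [hIci] at htend
  have hlt : ENNReal.ofReal p < 1 := ENNReal.ofReal_lt_one.2 hp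
  obtain ⟨n, hn⟩ := (htend.eventually_const_lt hlt).exists
  refine ⟨n, Nat.cast_nonneg n, ?_⟩
  have := ENNReal.ofReal_le_iff_le_toReal (measure_ne_top μ _) |>.1 hn.le
  exact this

end Aux

section Aux2
variable {μ : Measure ℝ}

lemma quant_nonneg (μ : Measure ℝ) (p : ℝ) : 0 ≤ quant μ p :=
  Real.sInf_nonneg (fun x hx => hx.1)

lemma quant_bddBelow (μ : Measure ℝ) (p : ℝ) : BddBelow {x : ℝ | 0 ≤ x ∧ p ≤ cdfR μ x} :=
  ⟨0, fun x hx => hx.1⟩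

lemma quant_le {p x : ℝ} (hx : 0 ≤ x) (h : p ≤ cdfR μ x) : quant μ p ≤ x :=
  csInf_le (quant_bddBelow μ p) ⟨hx, h⟩

lemma cdfR_tendsto [IsFiniteMeasure μ] (x : ℝ) :
    Tendsto (fun n : ℕ => cdfR μ (x + 1/(n+1))) atTop (𝓝 (cdfR μ x)) := by
  have hI : ⋂ n : ℕ, Set.Icc (0:ℝ) (x + 1/(n+1)) = Set.Icc 0 x := by
    ext y
    simp only [Set.mem_iInter, Set.mem_Icc]
    constructor
    · rintro h
      refine ⟨(h 0).1, ?_⟩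
      by_contra hc
      push_neg at hc
      obtain ⟨n, hn⟩ := exists_nat_one_div_lt (sub_pos.2 hc)
      have := (h n).2
      have : (1:ℝ)/(n+1) < y - x := hn
      linarith [(h n).2]
    · rintro ⟨h0, h1⟩ n
      have : (0:ℝ) < 1/(n+1) := by positivity
      exact ⟨h0, by linarith⟩
  have hanti : Antitone (fun n : ℕ => Set.Icc (0:ℝ) (x + 1/(n+1))) := by
    intro a b hab
    apply Set.Icc_subset_Icc_right
    have : (1:ℝ)/(b+1) ≤ 1/(a+1) := by
      apply one_div_le_one_div_of_le (by positivity)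
      have : (a:ℝ) ≤ b := Nat.cast_le.2 hab
      linarith
    linarith
  have htend := tendsto_measure_iInter_atTop (μ := μ)
    (fun n => (measurableSet_Icc).nullMeasurableSet) hanti ⟨0, measure_ne_top μ _⟩
  rw [hI] at htend
  have := (ENNReal.tendsto_toReal (measure_ne_top μ _)).comp htend
  exact this

lemma le_cdfR_of_quant_le (hμ : MemM μ) {p x : ℝ} (hp : p < 1) (hx : 0 ≤ x)
    (h : quant μ p ≤ x) : p ≤ cdfR μ x := by
  haveI := hμ.1
  have hne : {y : ℝ | 0 ≤ y ∧ p ≤ cdfR μ y}.Nonempty := by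
    obtain ⟨z, hz0, hz⟩ := exists_cdfR_ge hμ hp
    exact ⟨z, hz0, hz⟩
  have key : ∀ n : ℕ, p ≤ cdfR μ (x + 1/(n+1)) := by
    intro n
    have h1 : (0:ℝ) < 1/(n+1) := by positivity
    have hlt : quant μ p < x + 1/(n+1) := by linarith
    obtain ⟨y, hy, hyx⟩ := exists_lt_of_csInf_lt hne hlt
    exact hy.2.trans (cdfR_mono hyx.le)
  exact ge_of_tendsto' (cdfR_tendsto x) key

lemma quant_mono (hμ : MemM μ) {p q : ℝ} (hq : q < 1) (hpq : p ≤ q) :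
    quant μ p ≤ quant μ q := by
  haveI := hμ.1
  have hne : {y : ℝ | 0 ≤ y ∧ q ≤ cdfR μ y}.Nonempty := by
    obtain ⟨z, hz0, hz⟩ := exists_cdfR_ge hμ hq
    exact ⟨z, hz0, hz⟩
  exact csInf_le_csInf (quant_bddBelow μ p) hne (fun y hy => ⟨hy.1, hpq.trans hy.2⟩)

lemma quant_le_of_forall_lt (hμ : MemM μ) {p c : ℝ} (hp1 : p ≤ 1) (hc : 0 ≤ c)
    (h : ∀ q, 0 < q → q < p → quant μ q ≤ c) : quant μ p ≤ c := by
  haveI := hμ.1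
  have hpc : p ≤ cdfR μ c := by
    refine le_of_forall_lt_imp_le_of_dense (fun q hq => ?_)
    rcases le_or_gt q 0 with h0 | h0
    · exact h0.trans (cdfR_nonneg μ c)
    · exact le_cdfR_of_quant_le hμ (lt_of_lt_of_le hq hp1) hc (h q h0 hq)
  exact quant_le hc hpc

end Aux2

section Aux3
variable {μ : Measure ℝ}

lemma quant_aemeasurable (hμ : MemM μ) :
    AEMeasurable (quant μ) (MeasureTheory.volume.restrict (Set.Ioo (0:ℝ) 1)) := by
  set g : ℝ → ℝ := fun p => (⨆ n : ℕ, ENNReal.ofReal (quant μ (min p (1 - 1/(n+1))))).toReal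
    with hg
  have hcn : ∀ n : ℕ, (1:ℝ) - 1/(n+1) < 1 := by
    intro n
    have : (0:ℝ) < 1/(n+1) := by positivity
    linarith
  have hmono : ∀ n : ℕ, Monotone (fun p => quant μ (min p (1 - 1/(n+1)))) := by
    intro n p q hpq
    exact quant_mono hμ (lt_of_le_of_lt (min_le_right _ _) (hcn n)) (min_le_min_right _ hpq)
  have hgm : Measurable g := by
    apply ENNReal.measurable_toReal.comp
    apply Measurable.iSup
    intro n
    exact ENNReal.measurable_ofReal.comp (hmono n).measurable
  refine ⟨g, hgm, ?_⟩
  filter_upwards [MeasureTheory.ae_restrict_mem measurableSet_Ioo] with p hp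
  obtain ⟨hp0, hp1⟩ := hp
  obtain ⟨n, hn⟩ := exists_nat_one_div_lt (sub_pos.2 hp1)
  have hpn : p ≤ 1 - 1/(n+1) := by
    have : (1:ℝ)/(n+1) < 1 - p := hn
    linarith
  have hsup : (⨆ m : ℕ, ENNReal.ofReal (quant μ (min p (1 - 1/(m+1))))) =
      ENNReal.ofReal (quant μ p) := by
    apply le_antisymm
    · refine iSup_le (fun m => ?_)
      apply ENNReal.ofReal_le_ofReal
      exact quant_mono hμ hp1 (min_le_left _ _)
    · have : quant μ (min p (1 - 1/(n+1))) = quant μ p := by rw [min_eq_left hpn]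
      calc ENNReal.ofReal (quant μ p) = ENNReal.ofReal (quant μ (min p (1 - 1/(n+1)))) := by
            rw [this]
        _ ≤ _ := le_iSup (fun m : ℕ => ENNReal.ofReal (quant μ (min p (1 - 1/(m+1))))) n
  rw [hg]
  simp only [hsup]
  rw [ENNReal.toReal_ofReal (quant_nonneg μ p)]

lemma map_quant (hμ : MemM μ) :
    Measure.map (quant μ) (MeasureTheory.volume.restrict (Set.Ioo (0:ℝ) 1)) = μ := by
  haveI := hμ.1
  haveI : IsProbabilityMeasure (MeasureTheory.volume.restrict (Set.Ioo (0:ℝ) 1)) := by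
    constructor
    rw [Measure.restrict_apply_univ]
    simp [Real.volume_Ioo]
  haveI : IsProbabilityMeasure (Measure.map (quant μ) (MeasureTheory.volume.restrict (Set.Ioo (0:ℝ) 1))) :=
    Measure.isProbabilityMeasure_map (quant_aemeasurable hμ)
  apply MeasureTheory.Measure.ext_of_Iic
  intro a
  rw [Measure.map_apply_of_aemeasurable (quant_aemeasurable hμ) measurableSet_Iic,
    Measure.restrict_apply' measurableSet_Ioo]
  rcases lt_or_ge a 0 with ha | ha
  · have h1 : quant μ ⁻¹' Set.Iic a ∩ Set.Ioo 0 1 = ∅ := by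
      ext p
      simp only [Set.mem_inter_iff, Set.mem_preimage, Set.mem_Iic, Set.mem_Ioo, Set.mem_empty_iff_false]
      refine ⟨fun h => ?_, False.elim⟩
      linarith [quant_nonneg μ p, h.1]
    rw [h1]
    have h2 : μ (Set.Iic a) = 0 := by
      apply measure_mono_null _ hμ.2.1
      intro y hy
      simp only [Set.mem_Iic] at hy
      exact lt_of_le_of_lt hy ha
    simp [h2]
  · have hset : quant μ ⁻¹' Set.Iic a ∩ Set.Ioo 0 1 = Set.Iic (cdfR μ a) ∩ Set.Ioo 0 1 := by
      ext p
      simp only [Set.mem_inter_iff, Set.mem_preimage, Set.mem_Iic, Set.mem_Ioo]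
      constructor
      · rintro ⟨h1, h2, h3⟩
        exact ⟨le_cdfR_of_quant_le hμ h3 ha h1, h2, h3⟩
      · rintro ⟨h1, h2, h3⟩
        exact ⟨quant_le ha h1, h2, h3⟩
    rw [hset]
    set t := cdfR μ a with ht
    have ht0 : 0 ≤ t := cdfR_nonneg μ a
    have ht1 : t ≤ 1 := cdfR_le_one a
    have hvol : MeasureTheory.volume (Set.Iic t ∩ Set.Ioo (0:ℝ) 1) = ENNReal.ofReal t := by
      rcases lt_or_ge t 1 with h | h
      · have : Set.Iic t ∩ Set.Ioo (0:ℝ) 1 = Set.Ioc 0 t := by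
          ext p
          simp only [Set.mem_inter_iff, Set.mem_Iic, Set.mem_Ioo, Set.mem_Ioc]
          constructor
          · rintro ⟨h1, h2, h3⟩; exact ⟨h2, h1⟩
          · rintro ⟨h1, h2⟩; exact ⟨h2, h1, lt_of_le_of_lt h2 h⟩
        rw [this, Real.volume_Ioc]
        norm_num
      · have ht1' : t = 1 := le_antisymm ht1 h
        have : Set.Iic t ∩ Set.Ioo (0:ℝ) 1 = Set.Ioo 0 1 := by
          ext p
          simp only [Set.mem_inter_iff, Set.mem_Iic, Set.mem_Ioo]
          refine ⟨fun h' => h'.2, fun h' => ⟨h'.2.le.trans h, h'⟩⟩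
        rw [this, Real.volume_Ioo, ht1']
        norm_num
    rw [hvol]
    have hIic : μ (Set.Iic a) = μ (Set.Icc 0 a) := by
      apply le_antisymm
      · have hsub : Set.Iic a ⊆ Set.Iio 0 ∪ Set.Icc 0 a := by
          intro y hy
          rcases lt_or_ge y 0 with h | h
          · exact Or.inl h
          · exact Or.inr ⟨h, hy⟩
        calc μ (Set.Iic a) ≤ μ (Set.Iio 0 ∪ Set.Icc 0 a) := measure_mono hsub
          _ ≤ μ (Set.Iio 0) + μ (Set.Icc 0 a) := measure_union_le _ _
          _ = μ (Set.Icc 0 a) := by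
              have : μ (Set.Iio (0:ℝ)) = 0 := hμ.2.1
              rw [this, zero_add]
      · exact measure_mono (fun y hy => hy.2)
    rw [hIic, ht]
    exact ENNReal.ofReal_toReal (measure_ne_top μ _)

end Aux3

section Aux4
variable {μ ν : Measure ℝ}

lemma quant_intervalIntegrable (hμ : MemM μ) {a b : ℝ} (ha : 0 ≤ a) (hb : b < 1) (hab : a ≤ b) :
    IntervalIntegrable (quant μ) MeasureTheory.volume a b := by
  apply MonotoneOn.intervalIntegrable
  intro x hx y hy hxy
  rw [Set.uIcc_of_le hab] at hx hy
  exact quant_mono hμ (lt_of_le_of_lt hy.2 hb) hxy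

lemma quant_le_mul (hμ : MemM μ) (hν : MemM ν) {α : ℝ} (hα : 0 < α)
    (hint : ∀ p, 0 ≤ p → p < 1 →
      (∫ t in (0:ℝ)..p, quant ν t) = α * ∫ t in (0:ℝ)..p, quant μ t) :
    ∀ p, 0 < p → p < 1 → quant ν p ≤ α * quant μ p := by
  intro p hp0 hp1
  apply quant_le_of_forall_lt hν hp1.le (mul_nonneg hα.le (quant_nonneg μ p))
  intro q hq0 hqp
  have hq1 : q < 1 := hqp.trans hp1
  have hIν1 : IntervalIntegrable (quant ν) MeasureTheory.volume 0 q :=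
    quant_intervalIntegrable hν le_rfl hq1 hq0.le
  have hIν2 : IntervalIntegrable (quant ν) MeasureTheory.volume q p :=
    quant_intervalIntegrable hν hq0.le hp1 hqp.le
  have hIμ1 : IntervalIntegrable (quant μ) MeasureTheory.volume 0 q :=
    quant_intervalIntegrable hμ le_rfl hq1 hq0.le
  have hIμ2 : IntervalIntegrable (quant μ) MeasureTheory.volume q p :=
    quant_intervalIntegrable hμ hq0.le hp1 hqp.le
  have hsplitν := intervalIntegral.integral_add_adjacent_intervals hIν1 hIν2
  have hsplitμ := intervalIntegral.integral_add_adjacent_intervals hIμ1 hIμ2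
  have hE : (∫ t in q..p, quant ν t) = α * ∫ t in q..p, quant μ t := by
    have h1 := hint q hq0.le hq1
    have h2 := hint p (by linarith) hp1
    have e1 : (∫ t in q..p, quant ν t)
        = (∫ t in (0:ℝ)..p, quant ν t) - ∫ t in (0:ℝ)..q, quant ν t := by
      linarith [hsplitν]
    have e2 : (∫ t in q..p, quant μ t)
        = (∫ t in (0:ℝ)..p, quant μ t) - ∫ t in (0:ℝ)..q, quant μ t := by
      linarith [hsplitμ]
    rw [e1, e2, h1, h2]; ring
  have hlow : (p - q) * quant ν q ≤ ∫ t in q..p, quant ν t := by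
    have := intervalIntegral.integral_mono_on hqp.le (intervalIntegrable_const (c := quant ν q))
      hIν2 (fun t ht => quant_mono hν (lt_of_le_of_lt ht.2 hp1) ht.1)
    simpa [smul_eq_mul, mul_comm] using this
  have hhigh : (∫ t in q..p, quant μ t) ≤ (p - q) * quant μ p := by
    have := intervalIntegral.integral_mono_on hqp.le hIμ2
      (intervalIntegrable_const (c := quant μ p))
      (fun t ht => quant_mono hμ hp1 ht.2)
    simpa [smul_eq_mul, mul_comm] using this
  have hpq : 0 < p - q := by linarith
  have hchain : (p - q) * quant ν q ≤ (p - q) * (α * quant μ p) := by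
    have := mul_le_mul_of_nonneg_left hhigh hα.le
    nlinarith [hlow, hE]
  exact le_of_mul_le_mul_left hchain hpq

lemma cdfR_map_smul (μ : Measure ℝ) {α : ℝ} (hα : 0 < α) (x : ℝ) :
    cdfR (Measure.map (fun y => α * y) μ) x = cdfR μ (x / α) := by
  rw [cdfR, Measure.map_apply (measurable_const_mul α) measurableSet_Icc]
  congr 2
  ext y
  simp only [Set.mem_preimage, Set.mem_Icc]
  constructor
  · rintro ⟨h1, h2⟩
    refine ⟨by nlinarith, ?_⟩
    rw [le_div_iff₀ hα]; nlinarith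
  · rintro ⟨h1, h2⟩
    constructor
    · positivity
    · rw [le_div_iff₀ hα] at h2; nlinarith

lemma quant_map_smul (μ : Measure ℝ) {α : ℝ} (hα : 0 < α) (p : ℝ) :
    quant (Measure.map (fun y => α * y) μ) p = α * quant μ p := by
  have hset : {x : ℝ | 0 ≤ x ∧ p ≤ cdfR (Measure.map (fun y => α * y) μ) x}
      = {x : ℝ | 0 ≤ x ∧ p ≤ cdfR μ (x / α)} := by
    ext x
    rw [Set.mem_setOf_eq, Set.mem_setOf_eq, cdfR_map_smul μ hα]
  rw [quant, hset]
  set B := {x : ℝ | 0 ≤ x ∧ p ≤ cdfR μ x} with hBdef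
  set A := {x : ℝ | 0 ≤ x ∧ p ≤ cdfR μ (x / α)} with hAdef
  have hAB : ∀ x, x ∈ A → x / α ∈ B := by
    intro x hx
    exact ⟨div_nonneg hx.1 hα.le, hx.2⟩
  have hBA : ∀ y, y ∈ B → α * y ∈ A := by
    intro y hy
    refine ⟨mul_nonneg hα.le hy.1, ?_⟩
    rw [mul_div_cancel_left₀ _ hα.ne']
    exact hy.2
  rcases B.eq_empty_or_nonempty with hB | hB
  · have hA : A = ∅ := by
      rw [Set.eq_empty_iff_forall_notMem]
      intro x hx
      have := hAB x hx
      rw [hB] at this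
      exact this
    have hq : quant μ p = 0 := by
      have h0 : quant μ p = sInf B := rfl
      rw [h0, hB, Real.sInf_empty]
    rw [hA, hq, Real.sInf_empty, mul_zero]
  · have hA : A.Nonempty := by
      obtain ⟨y, hy⟩ := hB
      exact ⟨α * y, hBA y hy⟩
    have hbddA : BddBelow A := ⟨0, fun x hx => hx.1⟩
    have hbddB : BddBelow B := ⟨0, fun x hx => hx.1⟩
    have hqB : quant μ p = sInf B := rfl
    show sInf A = α * quant μ p
    rw [hqB]
    apply le_antisymm
    · have h1 : sInf A / α ≤ sInf B := by
        apply le_csInf hB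
        intro y hy
        rw [div_le_iff₀ hα]
        calc sInf A ≤ α * y := csInf_le hbddA (hBA y hy)
          _ = y * α := mul_comm _ _
      calc sInf A = α * (sInf A / α) := by field_simp
        _ ≤ α * sInf B := by
            apply mul_le_mul_of_nonneg_left h1 hα.le
    · apply le_csInf hA
      intro x hx
      have h2 : sInf B ≤ x / α := csInf_le hbddB (hAB x hx)
      calc α * sInf B ≤ α * (x / α) := mul_le_mul_of_nonneg_left h2 hα.le
        _ = x := by field_simp

lemma mMean_map_smul (μ : Measure ℝ) (α : ℝ) (hμint : MeasureTheory.Integrable id μ) :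
    mMean (Measure.map (fun y => α * y) μ) = α * mMean μ := by
  have h0 : mMean (Measure.map (fun y => α * y) μ) = ∫ x, id x ∂Measure.map (fun y => α * y) μ :=
    rfl
  rw [h0, MeasureTheory.integral_map (measurable_const_mul α).aemeasurable
    aestronglyMeasurable_id]
  simp only [id]
  rw [MeasureTheory.integral_const_mul]
  rfl

end Aux4

/-- Two measures of `𝐌` have the same Lorenz function on `[0,1]`
iff one is a rescaling of the other. -/
theorem lorenz_eq_iff_rescaling (μ ν : Measure ℝ) (hμ : MemM μ) (hν : MemM ν) :
    (∀ p ∈ Set.Icc (0:ℝ) 1, lorenz μ p = lorenz ν p) ↔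
      ∃ α : ℝ, 0 < α ∧ ν = Measure.map (fun x => α * x) μ := by
  constructor
  · intro h
    haveI := hμ.1
    haveI := hν.1
    have hmμ := hμ.2.2.2
    have hmν := hν.2.2.2
    set α := mMean ν / mMean μ with hαdef
    have hα : 0 < α := div_pos hmν hmμ
    have hint : ∀ p, 0 ≤ p → p < 1 →
        (∫ t in (0:ℝ)..p, quant ν t) = α * ∫ t in (0:ℝ)..p, quant μ t := by
      intro p hp0 hp1
      have h' := h p ⟨hp0, hp1.le⟩
      rw [lorenz, lorenz, div_eq_div_iff hmμ.ne' hmν.ne'] at h'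
      rw [hαdef]
      field_simp
      linarith
    have hint' : ∀ p, 0 ≤ p → p < 1 →
        (∫ t in (0:ℝ)..p, quant μ t) = α⁻¹ * ∫ t in (0:ℝ)..p, quant ν t := by
      intro p hp0 hp1
      rw [hint p hp0 hp1]
      field_simp
    have hle1 := quant_le_mul hμ hν hα hint
    have hle2 := quant_le_mul hν hμ (inv_pos.2 hα) hint'
    have heq : ∀ p ∈ Set.Ioo (0:ℝ) 1, quant ν p = α * quant μ p := by
      intro p hp
      refine le_antisymm (hle1 p hp.1 hp.2) ?_
      have h2 := hle2 p hp.1 hp.2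
      calc α * quant μ p ≤ α * (α⁻¹ * quant ν p) := mul_le_mul_of_nonneg_left h2 hα.le
        _ = quant ν p := by field_simp
    refine ⟨α, hα, ?_⟩
    have h1 : ν = Measure.map (quant ν) (MeasureTheory.volume.restrict (Set.Ioo 0 1)) :=
      (map_quant hν).symm
    rw [h1]
    have h2 : Measure.map (quant ν) (MeasureTheory.volume.restrict (Set.Ioo (0:ℝ) 1))
        = Measure.map (fun p => α * quant μ p)
            (MeasureTheory.volume.restrict (Set.Ioo (0:ℝ) 1)) := by
      apply Measure.map_congr
      filter_upwards [MeasureTheory.ae_restrict_mem measurableSet_Ioo] with p hp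
      exact heq p hp
    rw [h2]
    have h3 : (fun p => α * quant μ p) = (fun x => α * x) ∘ quant μ := rfl
    rw [h3, ← AEMeasurable.map_map_of_aemeasurable
      (measurable_const_mul α).aemeasurable (quant_aemeasurable hμ), map_quant hμ]
  · rintro ⟨α, hα, rfl⟩ p hp
    have hmμ := hμ.2.2.2
    rw [lorenz, lorenz, mMean_map_smul μ α hμ.2.2.1]
    simp_rw [quant_map_smul μ hα]
    rw [intervalIntegral.integral_const_mul, mul_div_mul_left _ _ hα.ne']
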